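/- For 1 ≤ K < d integers and λ, u ∈ (0,1), the function T_λ(u) = (λ/K) Σ_{j=0}^{K-1} (K-j) C(d,j) u^{d-j} (1-u)^j satisfies T_λ(u) ≤ λu. -/

import Mathlib

open Real Finset

lemma aux_choose (d j : ℕ) (h : j < d) :
    (d - j) * d.choose j = d * (d - 1).choose j := by
  obtain ⟨n, rfl⟩ : ∃ n, d = n + 1 := ⟨d - 1, by omega⟩
  have hj : j ≤ n := by omega
  have h1 := Nat.add_one_mul_choose_eq n (n - j)
  rw [Nat.choose_symm hj] at h1
  have h2 : n - j + 1 = n + 1 - j := by omega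
  rw [h2, Nat.choose_symm (show j ≤ n + 1 by omega)] at h1
  simp only [Nat.add_sub_cancel]
  rw [Nat.mul_comm]
  exact h1.symm

theorem stmt_5 (K d : ℕ) (hK : 1 ≤ K) (hKd : K < d)
    (l u : ℝ) (hl : l ∈ Set.Ioo (0:ℝ) 1) (hu : u ∈ Set.Ioo (0:ℝ) 1) :
    (l / K) * ∑ j ∈ Finset.range K,
        ((K:ℝ) - j) * (d.choose j) * u ^ (d - j) * (1 - u) ^ j ≤ l * u := by
  obtain ⟨hl0, hl1⟩ := hl
  obtain ⟨hu0, hu1⟩ := hu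
  have hu1' : (0:ℝ) ≤ 1 - u := by linarith
  have hK0 : (0:ℝ) < K := by exact_mod_cast hK
  have hd0 : (0:ℝ) < d := by exact_mod_cast Nat.lt_of_le_of_lt (Nat.zero_le K) hKd
  have hKd' : (K:ℝ) ≤ d := by exact_mod_cast hKd.le
  -- full sum identity
  have hfull : ∑ j ∈ Finset.range d, ((d:ℝ) - j) * (d.choose j) * u ^ (d - j) * (1 - u) ^ j
      = d * u := by
    have hbin : ∑ j ∈ Finset.range d, ((d-1).choose j : ℝ) * u ^ (d - 1 - j) * (1 - u) ^ j = 1 := by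
      have := add_pow (1 - u) u (d - 1)
      simp only [sub_add_cancel, one_pow] at this
      have hd1 : d - 1 + 1 = d := by omega
      rw [hd1] at this
      refine Eq.trans ?_ this.symm
      apply Finset.sum_congr rfl
      intro j hj
      ring
    calc ∑ j ∈ Finset.range d, ((d:ℝ) - j) * (d.choose j) * u ^ (d - j) * (1 - u) ^ j
        = ∑ j ∈ Finset.range d, (d * u) * (((d-1).choose j : ℝ) * u ^ (d - 1 - j) * (1 - u) ^ j) := by
          apply Finset.sum_congr rfl
          intro j hj
          simp only [Finset.mem_range] at hj
          have h1 : ((d:ℝ) - j) * (d.choose j) = d * ((d-1).choose j) := by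
            have := aux_choose d j hj
            have hcast : ((d - j : ℕ) : ℝ) = (d:ℝ) - j := by
              push_cast [Nat.cast_sub hj.le]; ring
            calc ((d:ℝ) - j) * (d.choose j) = (((d - j) * d.choose j : ℕ) : ℝ) := by
                  push_cast [hcast]; ring
              _ = ((d * (d-1).choose j : ℕ) : ℝ) := by rw [this]
              _ = d * ((d-1).choose j) := by push_cast; ring
          have h2 : u ^ (d - j) = u * u ^ (d - 1 - j) := by
            rw [← pow_succ']
            congr 1
            omega
          rw [h1, h2]; ring
      _ = (d * u) * ∑ j ∈ Finset.range d, (((d-1).choose j : ℝ) * u ^ (d - 1 - j) * (1 - u) ^ j) := by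
          rw [Finset.mul_sum]
      _ = d * u := by rw [hbin, mul_one]
  have key : ∑ j ∈ Finset.range K,
      ((K:ℝ) - j) * (d.choose j) * u ^ (d - j) * (1 - u) ^ j ≤ K * u := by
    have step1 : ∑ j ∈ Finset.range K,
        ((K:ℝ) - j) * (d.choose j) * u ^ (d - j) * (1 - u) ^ j
        ≤ ∑ j ∈ Finset.range K,
          ((K:ℝ)/d) * (((d:ℝ) - j) * (d.choose j) * u ^ (d - j) * (1 - u) ^ j) := by
      apply Finset.sum_le_sum
      intro j hj
      simp only [Finset.mem_range] at hj
      have hjK : (j:ℝ) < K := by exact_mod_cast hj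
      have h1 : ((K:ℝ) - j) ≤ (K/d) * ((d:ℝ) - j) := by
        rw [div_mul_eq_mul_div, le_div_iff₀ hd0]
        have : (K:ℝ) * j ≤ d * j := by
          apply mul_le_mul_of_nonneg_right hKd' (by positivity)
        nlinarith
      have hnn : (0:ℝ) ≤ (d.choose j : ℝ) * u ^ (d - j) * (1 - u) ^ j := by positivity
      calc ((K:ℝ) - j) * (d.choose j) * u ^ (d - j) * (1 - u) ^ j
          = ((K:ℝ) - j) * ((d.choose j : ℝ) * u ^ (d - j) * (1 - u) ^ j) := by ring
        _ ≤ ((K:ℝ)/d) * ((d:ℝ) - j) * ((d.choose j : ℝ) * u ^ (d - j) * (1 - u) ^ j) :=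
            mul_le_mul_of_nonneg_right h1 hnn
        _ = ((K:ℝ)/d) * (((d:ℝ) - j) * (d.choose j) * u ^ (d - j) * (1 - u) ^ j) := by ring
    have step2 : ∑ j ∈ Finset.range K,
        ((K:ℝ)/d) * (((d:ℝ) - j) * (d.choose j) * u ^ (d - j) * (1 - u) ^ j)
        ≤ ∑ j ∈ Finset.range d,
          ((K:ℝ)/d) * (((d:ℝ) - j) * (d.choose j) * u ^ (d - j) * (1 - u) ^ j) := by
      apply Finset.sum_le_sum_of_subset_of_nonneg
      · exact Finset.range_subset_range.mpr hKd.le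
      · intro j hj _
        simp only [Finset.mem_range] at hj
        have : (0:ℝ) ≤ (d:ℝ) - j := by
          have : (j:ℝ) < d := by exact_mod_cast hj
          linarith
        positivity
    calc ∑ j ∈ Finset.range K, ((K:ℝ) - j) * (d.choose j) * u ^ (d - j) * (1 - u) ^ j
        ≤ ∑ j ∈ Finset.range d,
          ((K:ℝ)/d) * (((d:ℝ) - j) * (d.choose j) * u ^ (d - j) * (1 - u) ^ j) :=
          le_trans step1 step2
      _ = ((K:ℝ)/d) * ∑ j ∈ Finset.range d,
          (((d:ℝ) - j) * (d.choose j) * u ^ (d - j) * (1 - u) ^ j) := by rw [Finset.mul_sum]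
      _ = ((K:ℝ)/d) * (d * u) := by rw [hfull]
      _ = K * u := by field_simp
  calc (l / K) * ∑ j ∈ Finset.range K,
        ((K:ℝ) - j) * (d.choose j) * u ^ (d - j) * (1 - u) ^ j
      ≤ (l / K) * (K * u) := by
        apply mul_le_mul_of_nonneg_left key (by positivity)
    _ = l * u := by field_simp
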